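/- arXiv:2009.00736 — 3 statements merged into one kernel-verified Lean document; each statement's English description precedes it below -/
import Mathlib

section
/- Let ū take values in [a,b] a.e., let v ∈ L²(Ω) satisfy the sign conditions v ≥ 0 a.e. on {ū = a} and v ≤ 0 a.e. on {ū = b}. For k ∈ ℕ define v_k(x) = 0 if a < ū(x) < a + 1/k or b − 1/k < ū(x) < b, and v_k(x) = min{k, max{v(x), −k}} otherwise. Then: (i) v_k satisfies the same sign conditions; (ii) |v_k(x)| ≤ |v(x)| a.e.; (iii) v_k → v in L²(Ω) as k → ∞; and (iv) for every 0 < ρ ≤ k⁻², the function ū + ρ v_k takes values in [a,b] a.e. -/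
open MeasureTheory Filter Topology ENNReal

lemma trunc_abs_le (k t : ℝ) (hk : 0 ≤ k) : |min k (max t (-k))| ≤ |t| := by
  rw [abs_le]
  constructor
  · exact le_min (by linarith [abs_nonneg t]) ((neg_abs_le t).trans (le_max_left _ _))
  · exact (min_le_right _ _).trans (max_le (le_abs_self t) (by linarith [abs_nonneg t]))

/-- Properties of the truncated critical directions v_k built from
a critical direction v: sign conditions, pointwise domination, L² convergence
to v, and admissibility of ū + ρ v_k for 0 < ρ ≤ k⁻² (k large enough so that
1/k ≤ b − a). -/
theorem truncated_directions_properties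
    (d : ℕ) (Ω : Set (EuclideanSpace ℝ (Fin d)))
    (hΩopen : IsOpen Ω) (hΩbdd : Bornology.IsBounded Ω)
    (hfin : volume Ω < ⊤)
    (a b : ℝ) (hab : a < b)
    (μ : Measure (EuclideanSpace ℝ (Fin d))) (hμ : μ = volume.restrict Ω)
    (ubar v : EuclideanSpace ℝ (Fin d) → ℝ)
    (hubar_meas : Measurable ubar)
    (hubar_mem : ∀ᵐ x ∂μ, ubar x ∈ Set.Icc a b)
    (hv : MemLp v 2 μ)
    (hv_a : ∀ᵐ x ∂μ, ubar x = a → 0 ≤ v x)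
    (hv_b : ∀ᵐ x ∂μ, ubar x = b → v x ≤ 0)
    (vk : ℕ → EuclideanSpace ℝ (Fin d) → ℝ)
    (hvk : ∀ k x, vk k x =
      if (a < ubar x ∧ ubar x < a + 1 / (k : ℝ)) ∨
         (b - 1 / (k : ℝ) < ubar x ∧ ubar x < b)
      then 0 else min (k : ℝ) (max (v x) (-(k : ℝ)))) :
    (∀ k, (∀ᵐ x ∂μ, ubar x = a → 0 ≤ vk k x) ∧ (∀ᵐ x ∂μ, ubar x = b → vk k x ≤ 0)) ∧
    (∀ k, ∀ᵐ x ∂μ, |vk k x| ≤ |v x|) ∧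
    Tendsto (fun k => eLpNorm (fun x => vk k x - v x) 2 μ) atTop (𝓝 0) ∧
    (∀ k : ℕ, 1 ≤ (b - a) * (k : ℝ) → ∀ ρ : ℝ, 0 < ρ → ρ ≤ ((k : ℝ) ^ 2)⁻¹ →
      ∀ᵐ x ∂μ, ubar x + ρ * vk k x ∈ Set.Icc a b) := by
  -- pointwise domination (everywhere, not just a.e.)
  have habs : ∀ k x, |vk k x| ≤ |v x| := by
    intro k x
    rw [hvk]
    split_ifs with h
    · simpa using abs_nonneg (v x)
    · exact trunc_abs_le _ _ (Nat.cast_nonneg k)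
  -- pointwise eventual equality vk k x = v x
  have hptw : ∀ x, ∀ᶠ k : ℕ in atTop, vk k x = v x := by
    intro x
    have h1k : Tendsto (fun k : ℕ => 1 / (k : ℝ)) atTop (𝓝 0) :=
      tendsto_one_div_atTop_nhds_zero_nat
    have hA : ∀ᶠ k : ℕ in atTop, ¬(a < ubar x ∧ ubar x < a + 1 / (k : ℝ)) := by
      rcases le_or_gt (ubar x) a with h | h
      · exact Eventually.of_forall fun k hk => absurd hk.1 (not_lt.2 h)
      · filter_upwards [h1k.eventually_lt_const (show (0:ℝ) < ubar x - a by linarith)]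
          with k hk
        intro hc; linarith [hc.2]
    have hB : ∀ᶠ k : ℕ in atTop, ¬(b - 1 / (k : ℝ) < ubar x ∧ ubar x < b) := by
      rcases le_or_gt b (ubar x) with h | h
      · exact Eventually.of_forall fun k hk => absurd hk.2 (not_lt.2 h)
      · filter_upwards [h1k.eventually_lt_const (show (0:ℝ) < b - ubar x by linarith)]
          with k hk
        intro hc; linarith [hc.1]
    have hC : ∀ᶠ k : ℕ in atTop, |v x| ≤ (k : ℝ) :=
      tendsto_natCast_atTop_atTop.eventually_ge_atTop (|v x|)
    filter_upwards [hA, hB, hC] with k hkA hkB hkC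
    rw [hvk]
    rw [if_neg (by tauto)]
    have h1 : -(k : ℝ) ≤ v x := by
      have := neg_abs_le (v x); linarith
    have h2 : v x ≤ (k : ℝ) := (le_abs_self (v x)).trans hkC
    rw [max_eq_left h1, min_eq_right h2]
  -- a.e. measurability of vk k
  have hvm := hv.aestronglyMeasurable.aemeasurable
  have hset : ∀ k : ℕ, MeasurableSet {x | (a < ubar x ∧ ubar x < a + 1 / (k : ℝ)) ∨
      (b - 1 / (k : ℝ) < ubar x ∧ ubar x < b)} := by
    intro k
    exact ((hubar_meas measurableSet_Ioo).union (hubar_meas measurableSet_Ioo))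
  have hvk_meas : ∀ k, AEMeasurable (vk k) μ := by
    intro k
    refine ⟨fun x => if (a < ubar x ∧ ubar x < a + 1 / (k : ℝ)) ∨
         (b - 1 / (k : ℝ) < ubar x ∧ ubar x < b)
      then 0 else min (k : ℝ) (max (hvm.mk v x) (-(k : ℝ))), ?_, ?_⟩
    · exact Measurable.ite (hset k) measurable_const
        (measurable_const.min (hvm.measurable_mk.max measurable_const))
    · filter_upwards [hvm.ae_eq_mk] with x hx
      rw [hvk, hx]
  refine ⟨?_, ?_, ?_, ?_⟩
  · -- (i) sign conditions
    intro k
    constructor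
    · filter_upwards [hv_a] with x hx hxa
      rw [hvk]
      split_ifs with h
      · exact le_refl 0
      · exact le_min (Nat.cast_nonneg k) (le_max_of_le_left (hx hxa))
    · filter_upwards [hv_b] with x hx hxb
      rw [hvk]
      split_ifs with h
      · exact le_refl 0
      · exact (min_le_right _ _).trans
          (max_le (hx hxb) (neg_nonpos.2 (Nat.cast_nonneg k)))
  · -- (ii) domination
    intro k
    exact Eventually.of_forall (habs k)
  · -- (iii) L² convergence
    have key : Tendsto
        (fun k => ∫⁻ x, (‖vk k x - v x‖₊ : ℝ≥0∞) ^ (2 : ℝ) ∂μ) atTop (𝓝 0) := by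
      have h0 : (0 : ℝ≥0∞) = ∫⁻ (_x : EuclideanSpace ℝ (Fin d)), 0 ∂μ := by simp
      rw [h0]
      refine tendsto_lintegral_of_dominated_convergence'
        (fun x => ((2 : ℝ≥0∞) * (‖v x‖₊ : ℝ≥0∞)) ^ (2 : ℝ)) ?_ ?_ ?_ ?_
      · intro k
        exact (ENNReal.continuous_rpow_const.measurable).comp_aemeasurable
          (((hvk_meas k).sub hvm).enorm)
      · intro k
        refine Eventually.of_forall fun x => ?_
        refine ENNReal.rpow_le_rpow ?_ (by norm_num)
        have h1 : ‖vk k x‖₊ ≤ ‖v x‖₊ := by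
          rw [← NNReal.coe_le_coe]
          simpa [Real.norm_eq_abs] using habs k x
        calc (‖vk k x - v x‖₊ : ℝ≥0∞) ≤ (‖vk k x‖₊ : ℝ≥0∞) + (‖v x‖₊ : ℝ≥0∞) := by
              exact_mod_cast nnnorm_sub_le (vk k x) (v x)
          _ ≤ (‖v x‖₊ : ℝ≥0∞) + (‖v x‖₊ : ℝ≥0∞) :=
              add_le_add_left (by exact_mod_cast h1) _
          _ = 2 * (‖v x‖₊ : ℝ≥0∞) := (two_mul _).symm
      · have hfin2 : ∫⁻ x, (‖v x‖₊ : ℝ≥0∞) ^ (2 : ℝ) ∂μ < ⊤ := by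
          have := lintegral_rpow_enorm_lt_top_of_eLpNorm_lt_top (p := 2) (f := v)
            (by norm_num) (by norm_num) hv.2
          simpa [enorm_eq_nnnorm] using this
        have heq2 : ∫⁻ x, ((2 : ℝ≥0∞) * (‖v x‖₊ : ℝ≥0∞)) ^ (2 : ℝ) ∂μ
            = (2 : ℝ≥0∞) ^ (2 : ℝ) * ∫⁻ x, (‖v x‖₊ : ℝ≥0∞) ^ (2 : ℝ) ∂μ := by
          rw [← lintegral_const_mul' _ _ (by norm_num)]
          exact lintegral_congr fun x => ENNReal.mul_rpow_of_nonneg _ _ (by norm_num)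
        rw [heq2]
        exact ENNReal.mul_ne_top (by norm_num) hfin2.ne
      · -- pointwise convergence
        refine Eventually.of_forall fun x => ?_
        refine Tendsto.congr' ?_ tendsto_const_nhds
        filter_upwards [hptw x] with k hk
        simp [hk]
    have heq : ∀ k, eLpNorm (fun x => vk k x - v x) 2 μ
        = (∫⁻ x, (‖vk k x - v x‖₊ : ℝ≥0∞) ^ (2 : ℝ) ∂μ) ^ (1 / (2 : ℝ)) := by
      intro k
      rw [eLpNorm_eq_lintegral_rpow_enorm_toReal (by norm_num) (by norm_num)]
      norm_num
      rfl
    have := ((ENNReal.continuous_rpow_const (y := 1 / (2:ℝ))).tendsto 0).comp key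
    rw [ENNReal.zero_rpow_of_pos (by norm_num : (0:ℝ) < 1 / 2)] at this
    exact Tendsto.congr (fun k => (heq k).symm) this
  · -- (iv) admissibility
    intro k hk ρ hρ hρle
    have hk0 : (0 : ℝ) < k := by nlinarith
    have h1k : 1 / (k : ℝ) ≤ b - a := by
      rw [div_le_iff₀ hk0]; linarith
    have hρk : ρ * (k : ℝ) ≤ 1 / (k : ℝ) := by
      have h := mul_le_mul_of_nonneg_right hρle hk0.le
      have h2 : ((k : ℝ) ^ 2)⁻¹ * k = 1 / k := by field_simp
      linarith [h2 ▸ h]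
    filter_upwards [hubar_mem, hv_a, hv_b] with x hmem ha hb
    rw [hvk]
    split_ifs with hcond
    · simpa using hmem
    · push_neg at hcond
      obtain ⟨hc1, hc2⟩ := hcond
      set t := min (k : ℝ) (max (v x) (-(k : ℝ))) with ht
      have htk : t ≤ k := min_le_left _ _
      have htk' : -(k : ℝ) ≤ t :=
        le_min (by linarith) (le_max_right _ _)
      have hub : ρ * t ≤ 1 / k := by
        calc ρ * t ≤ ρ * k := mul_le_mul_of_nonneg_left htk hρ.le
          _ ≤ 1 / k := hρk
      have hlb : -(1 / (k : ℝ)) ≤ ρ * t := by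
        have : ρ * (-(k : ℝ)) ≤ ρ * t := mul_le_mul_of_nonneg_left htk' hρ.le
        nlinarith
      by_cases hxa : ubar x = a
      · have hv0 : 0 ≤ v x := ha hxa
        have ht0 : 0 ≤ t := le_min hk0.le (le_max_of_le_left hv0)
        constructor
        · nlinarith
        · rw [hxa]; nlinarith
      · by_cases hxb : ubar x = b
        · have hv0 : v x ≤ 0 := hb hxb
          have ht0 : t ≤ 0 := (min_le_right _ _).trans (max_le hv0 (by linarith))
          constructor
          · rw [hxb]; nlinarith
          · nlinarith
        · have hxa' : a < ubar x := lt_of_le_of_ne hmem.1 (Ne.symm hxa)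
          have hxb' : ubar x < b := lt_of_le_of_ne hmem.2 hxb
          have h1 : a + 1 / (k : ℝ) ≤ ubar x := hc1 hxa'
          have h2 : ubar x ≤ b - 1 / (k : ℝ) := by
            by_contra hcon
            exact absurd (hc2 (not_le.1 hcon)) (not_le.2 hxb')
          constructor
          · nlinarith
          · nlinarith
end

section
/- Let H be a real Hilbert space, α, μ > 0, and let j : H → ℝ be C² such that j''(u)(v,v) = α‖v‖² + Q(u)(v,v) where Q(u)(v_k,v_k) → 0 whenever v_k ⇀ 0 weakly in H, and Q is jointly continuous in the sense that u_k → u strongly and v_k ⇀ v weakly imply Q(u_k)(v_k,v_k) → Q(u)(v,v). Suppose u_k → ū strongly in H, v_k ⇀ v weakly in H with ‖v_k‖ = 1 for all k, and limsup_k j''(u_k)(v_k,v_k) ≤ 0. Then v ≠ 0 is impossible together with j''(ū)(v,v) > 0; moreover if v = 0 then lim_k j''(u_k)(v_k,v_k) ≥ α > 0, a contradiction. In particular no such sequences exist. -/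
open Filter Topology

/-- Abstract contradiction core of the second-order sufficiency
proof: with j''(u)(v,v) = α‖v‖² + Q(u)(v,v), Q vanishing along weakly null
sequences and jointly sequentially continuous, there exist no sequences
u_k → ū strongly, v_k ⇀ v weakly with ‖v_k‖ = 1 and
limsup_k j''(u_k)(v_k,v_k) ≤ 0. -/
theorem no_degenerate_sequences
    {H : Type*} [NormedAddCommGroup H] [InnerProductSpace ℝ H] [CompleteSpace H]
    (α : ℝ) (hα : 0 < α)
    (j : H → ℝ) (hj : ContDiff ℝ 2 j)
    (J2 : H → H → ℝ) (hJ2 : ∀ u v, J2 u v = (fderiv ℝ (fderiv ℝ j) u v) v)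
    (Q : H → H → ℝ)
    (hstruct : ∀ u v, J2 u v = α * ‖v‖ ^ 2 + Q u v)
    (hQnull : ∀ (u : H) (vs : ℕ → H),
      (∀ w : H, Tendsto (fun k => (inner ℝ (vs k) w : ℝ)) atTop (𝓝 (0 : ℝ))) →
      Tendsto (fun k => Q u (vs k)) atTop (𝓝 (0 : ℝ)))
    (hQjoint : ∀ (us : ℕ → H) (u : H) (vs : ℕ → H) (v : H),
      Tendsto us atTop (𝓝 u) →
      (∀ w : H, Tendsto (fun k => (inner ℝ (vs k) w : ℝ)) atTop (𝓝 (inner ℝ v w : ℝ))) →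
      Tendsto (fun k => Q (us k) (vs k)) atTop (𝓝 (Q u v)))
    (us : ℕ → H) (ubar : H) (vs : ℕ → H) (v : H)
    (hus : Tendsto us atTop (𝓝 ubar))
    (hvs : ∀ w : H, Tendsto (fun k => (inner ℝ (vs k) w : ℝ)) atTop (𝓝 (inner ℝ v w : ℝ)))
    (hnorm : ∀ k, ‖vs k‖ = 1)
    (hpos : v ≠ 0 → 0 < J2 ubar v)
    (hlimsup : limsup (fun k => J2 (us k) (vs k)) atTop ≤ 0) :
    False := by

  -- Q ubar 0 = 0 via hQnull on the constant zero sequence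
  have hQ0 : Q ubar 0 = 0 := by
    have h := hQnull ubar (fun _ => 0) (by
      intro w; simpa using tendsto_const_nhds)
    exact tendsto_nhds_unique tendsto_const_nhds h
  -- the sequence J2 (us k) (vs k) converges to α + Q ubar v
  have hQconv : Tendsto (fun k => Q (us k) (vs k)) atTop (𝓝 (Q ubar v)) :=
    hQjoint us ubar vs v hus hvs
  have hconv : Tendsto (fun k => J2 (us k) (vs k)) atTop (𝓝 (α + Q ubar v)) := by
    have : (fun k => J2 (us k) (vs k)) = fun k => α * ‖vs k‖ ^ 2 + Q (us k) (vs k) := by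
      funext k; exact hstruct (us k) (vs k)
    rw [this]
    have : (fun k => α * ‖vs k‖ ^ 2 + Q (us k) (vs k))
        = fun k => α + Q (us k) (vs k) := by
      funext k; rw [hnorm k]; ring
    rw [this]
    simpa using (tendsto_const_nhds.add hQconv)
  have hls : limsup (fun k => J2 (us k) (vs k)) atTop = α + Q ubar v :=
    hconv.limsup_eq
  have hle : α + Q ubar v ≤ 0 := hls ▸ hlimsup
  by_cases hv : v = 0
  · subst hv
    rw [hQ0] at hle
    linarith
  · -- ‖v‖ ≤ 1
    have hvn : ‖v‖ ≤ 1 := by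
      have h1 : Tendsto (fun k => (inner ℝ (vs k) v : ℝ)) atTop (𝓝 (inner ℝ v v : ℝ)) := hvs v
      have h2 : ∀ k, (inner ℝ (vs k) v : ℝ) ≤ ‖v‖ := by
        intro k
        calc (inner ℝ (vs k) v : ℝ) ≤ ‖vs k‖ * ‖v‖ := real_inner_le_norm _ _
          _ = ‖v‖ := by rw [hnorm k, one_mul]
      have h3 : (inner ℝ v v : ℝ) ≤ ‖v‖ := le_of_tendsto h1 (Eventually.of_forall h2)
      rw [real_inner_self_eq_norm_sq] at h3
      nlinarith [norm_pos_iff.mpr hv]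
    have hJpos := hpos hv
    rw [hstruct ubar v] at hJpos
    have hsq : ‖v‖ ^ 2 ≤ 1 := by nlinarith [norm_nonneg v]
    have : α * ‖v‖ ^ 2 ≤ α := by nlinarith
    linarith
end

section
/- Let Ω ⊂ ℝ^d be open and bounded with finite measure, 𝔭̄ ∈ L²(Ω), and suppose the sign conditions 𝔭̄ ≥ 0 a.e. on {ū = a}, 𝔭̄ ≤ 0 a.e. on {ū = b}, 𝔭̄ = 0 elsewhere hold. Let τ_k ↓ 0, and let v_k ∈ C^{τ_k} (i.e., v_k satisfies the sign condition and v_k = 0 a.e. where |𝔭̄| > τ_k) with ‖v_k‖_{L²(Ω)} = 1 and v_k ⇀ v weakly in L²(Ω). Then ∫_Ω 𝔭̄ v dx = 0 and v(x) = 0 for a.e. x with 𝔭̄(x) ≠ 0; that is, v belongs to the critical cone C^0. -/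
open MeasureTheory Filter Topology
open scoped ENNReal

/-- Weak L² limits preserve a.e. sign conditions on (possibly nonmeasurable)
sets of the form `{x | P x}`. -/
lemma aux_sign_preserved {α : Type*} [MeasurableSpace α] (μ : Measure α) [IsFiniteMeasure μ]
    (P : α → Prop) (vs : ℕ → α → ℝ) (v : α → ℝ)
    (hvs_mem : ∀ k, MemLp (vs k) 2 μ) (hv_mem : MemLp v 2 μ)
    (hvs : ∀ k, ∀ᵐ x ∂μ, P x → 0 ≤ vs k x)
    (hweak : ∀ w : α → ℝ, MemLp w 2 μ →
      Tendsto (fun k => ∫ x, vs k x * w x ∂μ) atTop (𝓝 (∫ x, v x * w x ∂μ))) :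
    ∀ᵐ x ∂μ, P x → 0 ≤ v x := by
  obtain ⟨v', hv'meas, hvv'⟩ := hv_mem.1
  set A : Set α := {x | P x} with hA
  set T : Set α := toMeasurable μ A with hT
  have hTmeas : MeasurableSet T := measurableSet_toMeasurable μ A
  -- each vs k is a.e. nonnegative on T
  have claim : ∀ k, ∀ᵐ x ∂μ, x ∈ T → 0 ≤ vs k x := by
    intro k
    obtain ⟨u, humeas, huu⟩ := (hvs_mem k).1
    set M : Set α := T ∩ {x | u x < 0} with hM
    have hMmeas : MeasurableSet M :=
      hTmeas.inter (humeas.measurable measurableSet_Iio)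
    have hMnull : μ M = 0 := by
      have hsub : A ∩ M ⊆ {x | ¬(P x → 0 ≤ vs k x)} ∪ {x | vs k x ≠ u x} := by
        rintro x ⟨hxA, hxM⟩
        by_cases hvu : vs k x = u x
        · left
          intro h
          exact absurd (h hxA) (by rw [hvu]; exact not_le.mpr hxM.2)
        · right; exact hvu
      have hAM : μ (A ∩ M) = 0 := by
        refine measure_mono_null hsub (measure_union_null ?_ ?_)
        · exact (ae_iff.mp (hvs k))
        · exact ae_iff.mp huu
      have h1 : μ T ≤ μ (T \ M) := by
        calc μ T = μ A := by rw [hT, measure_toMeasurable]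
          _ ≤ μ (A ∩ M) + μ (A \ M) := measure_le_inter_add_diff μ A M
          _ = μ (A \ M) := by rw [hAM, zero_add]
          _ ≤ μ (T \ M) := measure_mono (Set.diff_subset_diff_left (subset_toMeasurable μ A))
      have h2 : μ (T \ M) + μ M = μ T := by
        have := measure_diff_add_inter (μ := μ) T hMmeas
        rwa [Set.inter_eq_right.mpr Set.inter_subset_left] at this
      have h3 : μ (T \ M) + μ M ≤ μ (T \ M) + 0 := by
        rw [add_zero, h2]; exact h1
      have h4 : μ M ≤ 0 :=
        (ENNReal.add_le_add_iff_left (measure_ne_top μ _)).mp h3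
      exact le_antisymm h4 (zero_le)
    have hae : ∀ᵐ x ∂μ, ¬(x ∈ T ∧ u x < 0) := by
      rw [ae_iff]
      simp only [not_not]; exact hMnull
    filter_upwards [hae, huu] with x hx hx2
    intro hxT
    rw [hx2]
    by_contra h
    exact hx ⟨hxT, not_le.mp h⟩
  -- the bad set for the limit
  set M' : Set α := T ∩ {x | v' x < 0} with hM'
  have hM'meas : MeasurableSet M' :=
    hTmeas.inter (hv'meas.measurable measurableSet_Iio)
  set w : α → ℝ := M'.indicator (fun _ => (1:ℝ)) with hw
  have hwmem : MemLp w 2 μ :=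
    memLp_indicator_const 2 hM'meas (1:ℝ) (Or.inr (measure_ne_top μ _))
  have hmul : ∀ (f : α → ℝ) (x : α), f x * w x = M'.indicator f x := by
    intro f x
    by_cases hx : x ∈ M' <;>
      simp [hw, Set.indicator_of_mem, Set.indicator_of_notMem, hx]
  -- each ∫ vs k * w is nonneg
  have hterm : ∀ k, 0 ≤ ∫ x, vs k x * w x ∂μ := by
    intro k
    have : (∫ x, vs k x * w x ∂μ) = ∫ x in M', vs k x ∂μ := by
      rw [← integral_indicator hM'meas]
      exact integral_congr_ae (Eventually.of_forall fun x => hmul (vs k) x)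
    rw [this]
    refine integral_nonneg_of_ae ?_
    filter_upwards [ae_restrict_of_ae (claim k), ae_restrict_mem hM'meas] with x hx hxM'
    exact hx hxM'.1
  have hlimnn : 0 ≤ ∫ x, v x * w x ∂μ := ge_of_tendsto' (hweak w hwmem) hterm
  -- rewrite the limit integral over M' with v'
  have hveq : (∫ x, v x * w x ∂μ) = ∫ x in M', v' x ∂μ := by
    rw [← integral_indicator hM'meas]
    refine integral_congr_ae ?_
    filter_upwards [hvv'] with x hx
    rw [← hmul v' x, hx]
  have hintv' : Integrable v' μ := ((hv_mem.integrable one_le_two).congr hvv')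
  have hM'null : μ M' = 0 := by
    have hnn : 0 ≤ᵐ[μ.restrict M'] fun x => -v' x := by
      filter_upwards [ae_restrict_mem hM'meas] with x hx
      exact le_of_lt (neg_pos.mpr hx.2)
    have hint : Integrable (fun x => -v' x) (μ.restrict M') :=
      (hintv'.restrict).neg
    have hle : (∫ x, -v' x ∂μ.restrict M') ≤ 0 := by
      rw [integral_neg, neg_nonpos]
      rw [hveq] at hlimnn
      exact hlimnn
    have hzero : (∫ x, -v' x ∂μ.restrict M') = 0 :=
      le_antisymm hle (integral_nonneg_of_ae hnn)
    have heq0 : (fun x => -v' x) =ᵐ[μ.restrict M'] 0 :=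
      (integral_eq_zero_iff_of_nonneg_ae hnn hint).mp hzero
    have hfalse : ∀ᵐ x ∂μ.restrict M', False := by
      filter_upwards [heq0, ae_restrict_mem hM'meas] with x hx hxM'
      have : v' x = 0 := by simpa [neg_eq_zero] using hx
      exact absurd this (ne_of_lt hxM'.2)
    have : μ.restrict M' Set.univ = 0 := by
      have := ae_iff.mp hfalse
      simpa using this
    rwa [Measure.restrict_apply_univ] at this
  -- conclude
  have hsub : {x | ¬(P x → 0 ≤ v x)} ⊆ M' ∪ {x | v x ≠ v' x} := by
    intro x hx
    push_neg at hx
    by_cases hvv : v x = v' x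
    · left
      refine ⟨subset_toMeasurable μ A hx.1, ?_⟩
      show v' x < 0
      rw [← hvv]; exact hx.2
    · right; exact hvv
  rw [ae_iff]
  exact measure_mono_null hsub (measure_union_null hM'null (ae_iff.mp hvv'))

/-- If τ_k ↓ 0, v_k ∈ C^{τ_k} with ‖v_k‖_{L²} = 1 and v_k ⇀ v
weakly in L², then ∫ 𝔭̄ v = 0 and v vanishes a.e. where 𝔭̄ ≠ 0; that is, v
belongs to the critical cone C^0. -/
theorem weak_limit_in_critical_cone
    (d : ℕ) (Ω : Set (EuclideanSpace ℝ (Fin d)))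
    (hΩopen : IsOpen Ω) (hΩbdd : Bornology.IsBounded Ω)
    (hfin : volume Ω < ⊤)
    (a b : ℝ) (hab : a < b)
    (μ : Measure (EuclideanSpace ℝ (Fin d))) (hμ : μ = volume.restrict Ω)
    (ubar pfrak : EuclideanSpace ℝ (Fin d) → ℝ)
    (hpfrak : MemLp pfrak 2 μ)
    (hubar_mem : ∀ᵐ x ∂μ, ubar x ∈ Set.Icc a b)
    (hsign_a : ∀ᵐ x ∂μ, ubar x = a → 0 ≤ pfrak x)
    (hsign_b : ∀ᵐ x ∂μ, ubar x = b → pfrak x ≤ 0)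
    (hsign_i : ∀ᵐ x ∂μ, a < ubar x → ubar x < b → pfrak x = 0)
    (τ : ℕ → ℝ) (hτpos : ∀ k, 0 < τ k) (hτ : Tendsto τ atTop (𝓝 0))
    (vs : ℕ → EuclideanSpace ℝ (Fin d) → ℝ) (v : EuclideanSpace ℝ (Fin d) → ℝ)
    (hvs_mem : ∀ k, MemLp (vs k) 2 μ) (hv_mem : MemLp v 2 μ)
    (hvs_a : ∀ k, ∀ᵐ x ∂μ, ubar x = a → 0 ≤ vs k x)
    (hvs_b : ∀ k, ∀ᵐ x ∂μ, ubar x = b → vs k x ≤ 0)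
    (hvs_0 : ∀ k, ∀ᵐ x ∂μ, τ k < |pfrak x| → vs k x = 0)
    (hnorm : ∀ k, eLpNorm (vs k) 2 μ = 1)
    (hweak : ∀ w : EuclideanSpace ℝ (Fin d) → ℝ, MemLp w 2 μ →
      Tendsto (fun k => ∫ x, vs k x * w x ∂μ) atTop (𝓝 (∫ x, v x * w x ∂μ))) :
    (∫ x, pfrak x * v x ∂μ) = 0 ∧
    (∀ᵐ x ∂μ, pfrak x ≠ 0 → v x = 0) ∧
    (∀ᵐ x ∂μ, ubar x = a → 0 ≤ v x) ∧
    (∀ᵐ x ∂μ, ubar x = b → v x ≤ 0) := by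
  haveI : IsFiniteMeasure μ :=
    ⟨by rw [hμ, Measure.restrict_apply_univ]; exact hfin⟩
  -- sign conditions pass to the weak limit
  have hva : ∀ᵐ x ∂μ, ubar x = a → 0 ≤ v x :=
    aux_sign_preserved μ (fun x => ubar x = a) vs v hvs_mem hv_mem hvs_a hweak
  have hvb : ∀ᵐ x ∂μ, ubar x = b → v x ≤ 0 := by
    have h := aux_sign_preserved μ (fun x => ubar x = b)
      (fun k x => -vs k x) (fun x => -v x)
      (fun k => (hvs_mem k).neg) hv_mem.neg
      (fun k => by
        filter_upwards [hvs_b k] with x hx h'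
        exact neg_nonneg.mpr (hx h'))
      (fun w hw => by
        simpa [neg_mul, integral_neg] using (hweak w hw).neg)
    filter_upwards [h] with x hx h'
    exact neg_nonneg.mp (hx h')
  -- ∫ v * pfrak = 0
  set E : ℝ≥0∞ := μ Set.univ ^ (1/(1:ℝ≥0∞).toReal - 1/(2:ℝ≥0∞).toReal) with hE
  have hEtop : E ≠ ⊤ := by
    refine (ENNReal.rpow_lt_top_of_nonneg ?_ (measure_ne_top μ _)).ne
    norm_num
  set C : ℝ := E.toReal with hC
  have hL1 : ∀ k, ∫ x, |vs k x| ∂μ ≤ C := by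
    intro k
    have h1 : eLpNorm (vs k) 1 μ ≤
        eLpNorm (vs k) 2 μ * μ Set.univ ^ (1/(1:ℝ≥0∞).toReal - 1/(2:ℝ≥0∞).toReal) :=
      eLpNorm_le_eLpNorm_mul_rpow_measure_univ one_le_two (hvs_mem k).1
    rw [hnorm k, one_mul] at h1
    have h2 : (∫ x, |vs k x| ∂μ) = (eLpNorm (vs k) 1 μ).toReal := by
      rw [eLpNorm_one_eq_lintegral_enorm,
        ← integral_norm_eq_lintegral_enorm (hvs_mem k).1]
      simp [Real.norm_eq_abs]
    rw [h2, hC]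
    exact ENNReal.toReal_mono hEtop h1
  have habs : ∀ k, |∫ x, vs k x * pfrak x ∂μ| ≤ τ k * C := by
    intro k
    have hint1 : Integrable (fun x => vs k x * pfrak x) μ :=
      memLp_one_iff_integrable.mp
        (MemLp.smul (r := 1) hpfrak (hvs_mem k))
    calc |∫ x, vs k x * pfrak x ∂μ| ≤ ∫ x, |vs k x| * |pfrak x| ∂μ := by
          simpa [Real.norm_eq_abs, abs_mul] using
            norm_integral_le_integral_norm (μ := μ) (fun x => vs k x * pfrak x)
      _ ≤ ∫ x, τ k * |vs k x| ∂μ := by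
          refine integral_mono_ae
            (hint1.abs.congr (Eventually.of_forall fun x => abs_mul _ _))
            ((((hvs_mem k).integrable one_le_two).abs.const_mul _)) ?_
          filter_upwards [hvs_0 k] with x hx
          rcases le_or_gt (|pfrak x|) (τ k) with h | h
          · calc |vs k x| * |pfrak x| ≤ |vs k x| * τ k :=
                  mul_le_mul_of_nonneg_left h (abs_nonneg _)
              _ = τ k * |vs k x| := mul_comm _ _
          · rw [hx h]
            simp [mul_nonneg (hτpos k).le (abs_nonneg _)]

      _ = τ k * ∫ x, |vs k x| ∂μ := integral_const_mul _ _
      _ ≤ τ k * C := mul_le_mul_of_nonneg_left (hL1 k) (hτpos k).le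
  have hzero : Tendsto (fun k => ∫ x, vs k x * pfrak x ∂μ) atTop (𝓝 0) := by
    have hτC : Tendsto (fun k => τ k * C) atTop (𝓝 0) := by
      simpa using hτ.mul_const C
    exact squeeze_zero_norm (fun k => by simpa [Real.norm_eq_abs] using habs k) hτC
  have hvp : (∫ x, v x * pfrak x ∂μ) = 0 :=
    tendsto_nhds_unique (hweak pfrak hpfrak) hzero
  have hpv : (∫ x, pfrak x * v x ∂μ) = 0 := by
    rw [← hvp]
    exact integral_congr_ae (Eventually.of_forall fun x => mul_comm _ _)
  -- pfrak * v ≥ 0 a.e.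
  have hprod : ∀ᵐ x ∂μ, 0 ≤ pfrak x * v x := by
    filter_upwards [hubar_mem, hsign_a, hsign_b, hsign_i, hva, hvb] with x hmem ha hb hi hva' hvb'
    rcases eq_or_lt_of_le hmem.1 with h1 | h1
    · exact mul_nonneg (ha h1.symm) (hva' h1.symm)
    rcases eq_or_lt_of_le hmem.2 with h2 | h2
    · simpa using mul_nonneg (neg_nonneg.mpr (hb h2)) (neg_nonneg.mpr (hvb' h2))
    · rw [hi h1 h2, zero_mul]
  have hint_prod : Integrable (fun x => pfrak x * v x) μ :=
    memLp_one_iff_integrable.mp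
      (MemLp.smul (r := 1) hv_mem hpfrak)
  have hzero_ae : (fun x => pfrak x * v x) =ᵐ[μ] 0 :=
    (integral_eq_zero_iff_of_nonneg_ae hprod hint_prod).mp hpv
  refine ⟨hpv, ?_, hva, hvb⟩
  filter_upwards [hzero_ae] with x hx hne
  rcases (by simpa using hx : pfrak x = 0 ∨ v x = 0) with h | h
  · exact absurd h hne
  · exact h
end
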